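/- arXiv:2201.05319 — 2 statements merged into one kernel-verified Lean document; each statement's English description precedes it below -/
import Mathlib

section
/- Let Θ be a set and for each n let Q(·, X_n): Θ → ℝ be a random function. Suppose (i) there is a continuous function Q*: Θ → ℝ uniquely maximized at θ*; (ii) for every ε > 0, the supremum of Q* over Θ \ B(ε) exists and δ := Q*(θ*) − sup_{θ ∈ Θ \ B(ε)} Q*(θ) > 0, where B(ε) = {θ : ‖θ − θ*‖ < ε}; (iii) sup_{θ ∈ Θ} |Q(θ, X_n) − Q*(θ)| → 0 in probability as n → ∞. Then any sequence of maximizers θ̂_n = argmax_{θ ∈ Θ} Q(θ, X_n) satisfies ‖θ̂_n − θ*‖ → 0 in probability. -/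
open MeasureTheory Filter Topology

/-- Argmax consistency: if `Q* ` is continuous and uniquely maximized at `θ*`,
the sup-gap over the complement of every ball is positive, and
`sup_{θ ∈ Θ} |Q(θ, X_n) − Q*(θ)| → 0` in probability, then any sequence of
maximizers `θ̂_n` converges to `θ*` in probability. -/
theorem argmax_consistency
    {E : Type*} [NormedAddCommGroup E] [NormedSpace ℝ E]
    {Ω : Type*} [MeasurableSpace Ω] (μ : Measure Ω) [IsProbabilityMeasure μ]
    (Θ : Set E) (Qs : E → ℝ) (θstar : E) (hθstar : θstar ∈ Θ)
    (Q : ℕ → E → Ω → ℝ) (θhat : ℕ → Ω → E)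
    (hcont : ContinuousOn Qs Θ)
    (hmax : ∀ θ ∈ Θ, θ ≠ θstar → Qs θ < Qs θstar)
    (hgap : ∀ ε > 0, BddAbove (Qs '' (Θ \ Metric.ball θstar ε)) ∧
      sSup (Qs '' (Θ \ Metric.ball θstar ε)) < Qs θstar)
    (hunif : ∀ δ > 0,
      Tendsto (fun n => μ {ω | ∃ θ ∈ Θ, δ < |Q n θ ω - Qs θ|}) atTop (𝓝 0))
    (hhatmem : ∀ n ω, θhat n ω ∈ Θ)
    (hhatmax : ∀ n ω, ∀ θ ∈ Θ, Q n θ ω ≤ Q n (θhat n ω) ω) :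
    ∀ ε > 0, Tendsto (fun n => μ {ω | ε < ‖θhat n ω - θstar‖}) atTop (𝓝 0) := by
  intro ε hε
  obtain ⟨hbdd, hlt⟩ := hgap ε hε
  set δ := Qs θstar - sSup (Qs '' (Θ \ Metric.ball θstar ε)) with hδ
  have hδpos : 0 < δ := by simp only [hδ]; linarith
  have hsub : ∀ n, {ω | ε < ‖θhat n ω - θstar‖} ⊆
      {ω | ∃ θ ∈ Θ, δ/3 < |Q n θ ω - Qs θ|} := by
    intro n ω hω
    by_contra h
    simp only [Set.mem_setOf_eq] at h
    push_neg at h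
    have h1 := abs_le.mp (h (θhat n ω) (hhatmem n ω))
    have h2 := abs_le.mp (h θstar hθstar)
    have hmemc : θhat n ω ∈ Θ \ Metric.ball θstar ε := by
      refine ⟨hhatmem n ω, ?_⟩
      simp only [Metric.mem_ball, dist_eq_norm, not_lt]
      exact le_of_lt hω
    have hle : Qs (θhat n ω) ≤ sSup (Qs '' (Θ \ Metric.ball θstar ε)) :=
      le_csSup hbdd ⟨_, hmemc, rfl⟩
    have hq := hhatmax n ω θstar hθstar
    linarith [h1.1, h1.2, h2.1, h2.2]
  have hu := hunif (δ/3) (by positivity)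
  exact tendsto_of_tendsto_of_tendsto_of_le_of_le tendsto_const_nhds hu
    (fun n => zero_le) (fun n => measure_mono (hsub n))
end

section
/- For the Gaussian (RBF) kernel K(x, y) = exp(−γ‖x − y‖²) with γ > 0 on ℝ^p, if x_1, …, x_n are pairwise distinct points, then the kernel matrix (K(x_i, x_j))_{i,j} is positive definite, hence of full rank n. -/
open MeasureTheory Complex Real
open scoped RealInnerProductSpace

/-- Dedekind-style linear independence of the exponential characters
`v ↦ exp (I ⟪xᵢ, v⟫)` for pairwise distinct frequencies `xᵢ`. -/
lemma gaussian_char_indep {n p : ℕ} (x : Fin n → EuclideanSpace ℝ (Fin p))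
    (hx : Function.Injective x) (c : Fin n → ℝ)
    (h : ∀ v : EuclideanSpace ℝ (Fin p),
      ∑ i, (c i : ℂ) * Complex.exp (Complex.I * ((⟪x i, v⟫ : ℝ) : ℂ)) = 0) : c = 0 := by
  classical
  let χ : Fin n → (Multiplicative (EuclideanSpace ℝ (Fin p)) →* ℂ) := fun i =>
    { toFun := fun v => Complex.exp (Complex.I * ((⟪x i, v.toAdd⟫ : ℝ) : ℂ))
      map_one' := by simp
      map_mul' := by
        intro v w
        show Complex.exp _ = _
        rw [show (v * w).toAdd = v.toAdd + w.toAdd from rfl, inner_add_right, ← Complex.exp_add]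
        push_cast
        ring_nf }
  have hinj : Function.Injective χ := by
    intro i j hij
    by_contra hne
    have hxij : x i - x j ≠ 0 := sub_ne_zero.mpr (fun hh => hne (hx hh))
    have hn0 : ‖x i - x j‖ ≠ 0 := norm_ne_zero_iff.mpr hxij
    have hnorm : (0:ℝ) < ‖x i - x j‖ ^ 2 := by positivity
    set v : EuclideanSpace ℝ (Fin p) := (π / ‖x i - x j‖ ^ 2) • (x i - x j) with hv
    have hiv : ⟪x i, v⟫ - ⟪x j, v⟫ = π := by
      rw [← inner_sub_left, hv, real_inner_smul_right, real_inner_self_eq_norm_sq]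
      field_simp
    have h2 : Complex.exp (Complex.I * ((⟪x i, v⟫ : ℝ) : ℂ)) =
        Complex.exp (Complex.I * ((⟪x j, v⟫ : ℝ) : ℂ)) :=
      congrFun (congrArg (fun f => f.toFun) hij) (Multiplicative.ofAdd v)
    have h3 : Complex.exp (Complex.I * ((⟪x i, v⟫ : ℝ) : ℂ)
        - Complex.I * ((⟪x j, v⟫ : ℝ) : ℂ)) = 1 := by
      rw [Complex.exp_sub, h2, div_self (Complex.exp_ne_zero _)]
    rw [← mul_sub] at h3
    have h4 : (((⟪x i, v⟫ : ℝ) : ℂ) - ((⟪x j, v⟫ : ℝ) : ℂ)) = (π : ℂ) := by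
      rw [← Complex.ofReal_sub, hiv]
    rw [h4, mul_comm, Complex.exp_pi_mul_I] at h3
    norm_num at h3
  have hli : LinearIndependent ℂ (fun i => ⇑(χ i)) :=
    (linearIndependent_monoidHom (Multiplicative (EuclideanSpace ℝ (Fin p))) ℂ).comp χ hinj
  have hzero : ∑ i, (c i : ℂ) • ⇑(χ i) = 0 := by
    funext v
    simp only [Finset.sum_apply, Pi.smul_apply, smul_eq_mul, Pi.zero_apply]
    exact h v.toAdd
  have hz := Fintype.linearIndependent_iff.mp hli (fun i => (c i : ℂ)) hzero
  funext i
  simpa using Complex.ofReal_eq_zero.mp (hz i)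

/-- Pointwise expansion of the nonnegative integrand as the double sum of
Gaussian-Fourier terms. -/
lemma gaussian_pointwise {n p : ℕ} (b : ℝ) (x : Fin n → EuclideanSpace ℝ (Fin p))
    (c : Fin n → ℝ) (v : EuclideanSpace ℝ (Fin p)) :
    ((Real.exp (-b * ‖v‖^2) * Complex.normSq (∑ i, (c i : ℂ) *
        Complex.exp (Complex.I * ((⟪x i, v⟫ : ℝ) : ℂ))) : ℝ) : ℂ) =
    ∑ i, ∑ j, ((c i * c j : ℝ) : ℂ) *
      Complex.exp (-(b:ℂ) * ‖v‖^2 + Complex.I * ((⟪x i - x j, v⟫ : ℝ) : ℂ)) := by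
  set F : ℂ := ∑ i, (c i : ℂ) * Complex.exp (Complex.I * ((⟪x i, v⟫ : ℝ) : ℂ)) with hF
  have hconj : (starRingEnd ℂ) F = ∑ j, (c j : ℂ) *
      Complex.exp (-(Complex.I * ((⟪x j, v⟫ : ℝ) : ℂ))) := by
    rw [hF, map_sum]
    refine Finset.sum_congr rfl fun j _ => ?_
    rw [map_mul, Complex.conj_ofReal, ← Complex.exp_conj, map_mul, Complex.conj_I,
      Complex.conj_ofReal, neg_mul]
  push_cast
  rw [← Complex.mul_conj, hconj, hF, Finset.sum_mul_sum]
  rw [Finset.mul_sum]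
  refine Finset.sum_congr rfl fun i _ => ?_
  rw [Finset.mul_sum]
  refine Finset.sum_congr rfl fun j _ => ?_
  rw [inner_sub_left, Complex.ofReal_sub, mul_sub, Complex.exp_add, Complex.exp_sub,
    Complex.exp_neg, div_eq_mul_inv]
  ring

/-- Strict positive definiteness of the Gaussian (RBF) kernel: for pairwise
distinct points `x₁, …, xₙ ∈ ℝ^p` and `γ > 0`, the kernel matrix
`(exp(−γ‖xᵢ − xⱼ‖²))_{i,j}` is positive definite (hence of full rank). -/
theorem gaussian_kernel_matrix_posDef
    {n p : ℕ} (γ : ℝ) (hγ : 0 < γ)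
    (x : Fin n → EuclideanSpace ℝ (Fin p)) (hx : Function.Injective x)
    (K : Matrix (Fin n) (Fin n) ℝ)
    (hK : ∀ i j, K i j = Real.exp (-γ * ‖x i - x j‖ ^ 2)) :
    K.PosDef := by
  classical
  constructor
  · -- symmetry
    ext i j
    simp only [Matrix.conjTranspose_apply, star_trivial, hK, norm_sub_rev]
  intro c hc
  -- notation
  set b : ℝ := 1 / (4 * γ) with hbdef
  have hb : 0 < b := by positivity
  have hbc : (0:ℝ) < ((b:ℂ)).re := by simpa using hb
  set A : ℂ := ((π : ℂ) / (b:ℂ)) ^ ((Module.finrank ℝ (EuclideanSpace ℝ (Fin p)) : ℂ) / 2)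
    with hA
  have key : ∀ w : EuclideanSpace ℝ (Fin p),
      ∫ v : EuclideanSpace ℝ (Fin p),
        Complex.exp (-(b:ℂ) * ‖v‖^2 + Complex.I * ((⟪w, v⟫ : ℝ) : ℂ)) =
      A * Complex.exp (-(γ:ℂ) * ‖w‖^2) := by
    intro w
    rw [GaussianFourier.integral_cexp_neg_mul_sq_norm_add hbc Complex.I w]
    congr 2
    rw [Complex.I_sq]
    have hb0 : (b:ℂ) ≠ 0 := by exact_mod_cast hb.ne'
    have hγ0 : (γ:ℂ) ≠ 0 := by exact_mod_cast hγ.ne'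
    rw [hbdef]
    push_cast
    field_simp
  set F : EuclideanSpace ℝ (Fin p) → ℂ :=
    fun v => ∑ i, (c i : ℂ) * Complex.exp (Complex.I * ((⟪x i, v⟫ : ℝ) : ℂ)) with hFdef
  set g : EuclideanSpace ℝ (Fin p) → ℝ :=
    fun v => Real.exp (-b * ‖v‖^2) * Complex.normSq (F v) with hgdef
  have hpt : ∀ v, ((g v : ℝ) : ℂ) = ∑ i, ∑ j, ((c i * c j : ℝ) : ℂ) *
      Complex.exp (-(b:ℂ) * ‖v‖^2 + Complex.I * ((⟪x i - x j, v⟫ : ℝ) : ℂ)) :=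
    fun v => gaussian_pointwise b x c v
  have hint : ∀ w : EuclideanSpace ℝ (Fin p),
      Integrable (fun v : EuclideanSpace ℝ (Fin p) =>
        Complex.exp (-(b:ℂ) * ‖v‖^2 + Complex.I * ((⟪w, v⟫ : ℝ) : ℂ))) :=
    fun w => GaussianFourier.integrable_cexp_neg_mul_sq_norm_add hbc Complex.I w
  have h1 : Integrable (fun v : EuclideanSpace ℝ (Fin p) =>
      ∑ i, ∑ j, ((c i * c j : ℝ) : ℂ) *
        Complex.exp (-(b:ℂ) * ‖v‖^2 + Complex.I * ((⟪x i - x j, v⟫ : ℝ) : ℂ))) :=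
    integrable_finset_sum _ fun i _ =>
      integrable_finset_sum _ fun j _ => (hint (x i - x j)).const_mul _
  -- the main integral identity
  have hmain : ∫ v, ((g v : ℝ) : ℂ) =
      ∑ i, ∑ j, ((c i * c j : ℝ) : ℂ) * (A * Complex.exp (-(γ:ℂ) * ‖x i - x j‖^2)) := by
    rw [show (fun v : EuclideanSpace ℝ (Fin p) => ((g v : ℝ) : ℂ)) = fun v =>
        ∑ i, ∑ j, ((c i * c j : ℝ) : ℂ) *
          Complex.exp (-(b:ℂ) * ‖v‖^2 + Complex.I * ((⟪x i - x j, v⟫ : ℝ) : ℂ))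
      from funext hpt]
    rw [integral_finset_sum _ fun i _ =>
      integrable_finset_sum _ fun j _ => (hint (x i - x j)).const_mul _]
    refine Finset.sum_congr rfl fun i _ => ?_
    rw [integral_finset_sum _ fun j _ => (hint (x i - x j)).const_mul _]
    refine Finset.sum_congr rfl fun j _ => ?_
    rw [integral_const_mul, key]
  -- pass to a real identity
  set Ar : ℝ := (π / b) ^ ((p : ℝ) / 2) with hArdef
  have hAr_pos : 0 < Ar := Real.rpow_pos_of_pos (div_pos Real.pi_pos hb) _
  have hAAr : A = ((Ar : ℝ) : ℂ) := by
    rw [hA, hArdef, Complex.ofReal_cpow (div_pos Real.pi_pos hb).le]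
    push_cast [finrank_euclideanSpace_fin]
    norm_num
  set S : ℝ := ∑ i, ∑ j, c i * c j * K i j with hSdef
  have hreal : ∫ v, g v = Ar * S := by
    have := hmain
    have hcast : ∫ v, ((g v : ℝ) : ℂ) = ((∫ v, g v : ℝ) : ℂ) := integral_ofReal
    rw [hcast] at this
    have hrhs : (∑ i, ∑ j, ((c i * c j : ℝ) : ℂ) * (A * Complex.exp (-(γ:ℂ) * ‖x i - x j‖^2)))
        = ((Ar * S : ℝ) : ℂ) := by
      rw [hAAr, hSdef]
      push_cast [Finset.mul_sum]
      refine Finset.sum_congr rfl fun i _ => Finset.sum_congr rfl fun j _ => ?_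
      rw [hK i j]
      push_cast [Complex.ofReal_exp]
      ring
    rw [hrhs] at this
    exact_mod_cast this
  -- nonnegativity
  have hgnn : ∀ v, 0 ≤ g v := fun v =>
    mul_nonneg (Real.exp_nonneg _) (Complex.normSq_nonneg _)
  have hS_nonneg : 0 ≤ S := by
    have h0 : 0 ≤ ∫ v, g v := integral_nonneg hgnn
    nlinarith
  -- the quadratic form equals S
  have hdot : dotProduct (star c) (K.mulVec c) = S := by
    rw [hSdef]
    simp only [dotProduct, Pi.star_apply, star_trivial, Matrix.mulVec, dotProduct,
      Finset.mul_sum]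
    exact Finset.sum_congr rfl fun i _ => Finset.sum_congr rfl fun j _ => by ring
  rw [show (c.sum fun i xi => c.sum fun j xj => star xi * K i j * xj) = S by
    rw [hSdef, Finsupp.sum_fintype _ _ (by simp)]
    refine Finset.sum_congr rfl fun i _ => ?_
    rw [Finsupp.sum_fintype _ _ (by simp)]
    exact Finset.sum_congr rfl fun j _ => by simp only [star_trivial]; ring]
  rcases lt_or_eq_of_le hS_nonneg with h | h
  · exact h
  -- S = 0 leads to c = 0, contradiction
  exfalso
  have hint_g : Integrable g := by
    have h2 := h1.re
    simp only [← hpt] at h2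
    simpa using h2
  have hg0 : ∫ v, g v = 0 := by rw [hreal, ← h, mul_zero]
  have hgae : g =ᵐ[volume] 0 := (integral_eq_zero_iff_of_nonneg hgnn hint_g).mp hg0
  have hgcont : Continuous g := by
    rw [hgdef]
    apply Continuous.mul
    · fun_prop
    · refine Complex.continuous_normSq.comp (continuous_finset_sum _ fun i _ => ?_)
      refine continuous_const.mul (Complex.continuous_exp.comp (continuous_const.mul ?_))
      exact Complex.continuous_ofReal.comp (continuous_const.inner continuous_id)
  have hgzero : g = 0 := (hgcont.ae_eq_iff_eq volume continuous_const).mp hgae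
  have hFzero : ∀ v, F v = 0 := by
    intro v
    have hv : g v = 0 := by rw [hgzero]; rfl
    rw [hgdef] at hv
    have : Complex.normSq (F v) = 0 := by
      rcases mul_eq_zero.mp hv with h' | h'
      · exact absurd h' (Real.exp_ne_zero _)
      · exact h'
    exact Complex.normSq_eq_zero.mp this
  exact hc (DFunLike.coe_injective (gaussian_char_indep x hx c hFzero))
end
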